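/- Suppose x, y, z are coprime integers with x^5 + y^5 = z^l for a prime l ≥ 7, with xyz ≠ 0 and 5 dividing z. Then there exist nonzero coprime integers z_1, z_2 with 5(x + y) = z_1^l, H_5(x,y) = 5 z_2^l, and z = z_1 z_2, where H_5(x,y) = x^4 - x^3 y + x^2 y^2 - x y^3 + y^4. -/

import Mathlib

theorem factorization_55l_case_II (l : ℕ) (hl : l.Prime) (hl7 : 7 ≤ l)
    (x y z : ℤ) (hxy : IsCoprime x y) (heq : x ^ 5 + y ^ 5 = z ^ l)
    (hnz : x * y * z ≠ 0) (h5 : (5 : ℤ) ∣ z) :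
    ∃ z₁ z₂ : ℤ, z₁ ≠ 0 ∧ z₂ ≠ 0 ∧ IsCoprime z₁ z₂ ∧
      5 * (x + y) = z₁ ^ l ∧
      x ^ 4 - x ^ 3 * y + x ^ 2 * y ^ 2 - x * y ^ 3 + y ^ 4 = 5 * z₂ ^ l ∧
      z = z₁ * z₂ := by
  have hz : z ≠ 0 := fun h => hnz (by simp [h])
  have hlpos : 0 < l := lt_of_lt_of_le (by norm_num) hl7
  have hlodd : Odd l := hl.odd_of_ne_two (by omega)
  set A : ℤ := x + y with hA
  set B : ℤ := x ^ 4 - x ^ 3 * y + x ^ 2 * y ^ 2 - x * y ^ 3 + y ^ 4 with hB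
  have hAB : A * B = z ^ l := by rw [hA, hB, ← heq]; ring
  -- 5 ∣ z^l
  have h5zl : (5 : ℤ) ∣ z ^ l := h5.trans (dvd_pow_self z hlpos.ne')
  -- 5 ∣ A
  have h5A : (5 : ℤ) ∣ A := by
    haveI : Fact (Nat.Prime 5) := ⟨by norm_num⟩
    have key : ((x + y : ℤ) : ZMod 5) = 0 := by
      have hc : ((x ^ 5 + y ^ 5 : ℤ) : ZMod 5) = 0 := by
        rw [heq, ZMod.intCast_zmod_eq_zero_iff_dvd]; exact_mod_cast h5zl
      push_cast at hc ⊢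
      have hx := ZMod.pow_card (x : ZMod 5)
      have hy := ZMod.pow_card (y : ZMod 5)
      calc (x : ZMod 5) + y = (x : ZMod 5) ^ 5 + (y : ZMod 5) ^ 5 := by rw [hx, hy]
        _ = 0 := hc
    exact (ZMod.intCast_zmod_eq_zero_iff_dvd _ 5).mp key
  -- 5 ∤ x
  have h5x : ¬ (5 : ℤ) ∣ x := by
    intro hx
    have hy : (5 : ℤ) ∣ y := (dvd_add_right hx).mp h5A
    have := hxy.isUnit_of_dvd' hx hy
    rw [Int.isUnit_iff] at this
    omega
  -- B = 5 x^4 mod 25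
  obtain ⟨t, ht⟩ := h5A
  have hyt : y = 5 * t - x := by linarith [ht]
  have hBmod : B = 5 * x ^ 4 + 25 * (-2 * x ^ 3 * t + 10 * x ^ 2 * t ^ 2
      - 25 * x * t ^ 3 + 25 * t ^ 4) := by rw [hB, hyt]; ring
  -- 5 ∣ B, with quotient b
  have h5B : (5 : ℤ) ∣ B := ⟨x ^ 4 + 5 * (-2 * x ^ 3 * t + 10 * x ^ 2 * t ^ 2
      - 25 * x * t ^ 3 + 25 * t ^ 4), by rw [hBmod]; ring⟩
  obtain ⟨b, hb⟩ := h5B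
  -- 5 ∤ b
  have h5b : ¬ (5 : ℤ) ∣ b := by
    rintro ⟨c, hc⟩
    have h5x4 : (5 : ℤ) * x ^ 4 = 5 * (5 * (c - (-2 * x ^ 3 * t + 10 * x ^ 2 * t ^ 2
        - 25 * x * t ^ 3 + 25 * t ^ 4))) := by linear_combination hb + 5 * hc - hBmod
    have hx4 : (5 : ℤ) ∣ x ^ 4 :=
      ⟨_, mul_left_cancel₀ (by norm_num : (5 : ℤ) ≠ 0) h5x4⟩
    exact h5x (Int.Prime.dvd_pow' (by norm_num) hx4)
  -- key identity: B = A * q + 5 y^4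
  have hkey : B = A * (x ^ 3 - 2 * x ^ 2 * y + 3 * x * y ^ 2 - 4 * y ^ 3) + 5 * y ^ 4 := by
    rw [hA, hB]; ring
  -- coprimality of 5A and b
  have hcop : IsCoprime (5 * A) b := by
    rw [Int.isCoprime_iff_gcd_eq_one]
    by_contra hg
    obtain ⟨p, hp, hpdvd⟩ := Nat.exists_prime_and_dvd hg
    have hpA : (p : ℤ) ∣ 5 * A := by
      have := hpdvd.trans (Nat.gcd_dvd_left _ _)
      exact dvd_trans (Int.natCast_dvd_natCast.mpr this) (Int.natAbs_dvd.mpr dvd_rfl)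
    have hpb : (p : ℤ) ∣ b := by
      have := hpdvd.trans (Nat.gcd_dvd_right _ _)
      exact dvd_trans (Int.natCast_dvd_natCast.mpr this) (Int.natAbs_dvd.mpr dvd_rfl)
    have hp5 : p ≠ 5 := by
      rintro rfl
      exact h5b (by exact_mod_cast hpb)
    have hpprime : Prime (p : ℤ) := Nat.prime_iff_prime_int.mp hp
    have hp5' : ¬ (p : ℤ) ∣ 5 := by
      intro h
      have h' : p ∣ 5 := by exact_mod_cast h
      exact hp5 ((Nat.prime_dvd_prime_iff_eq hp (by norm_num)).mp h')
    have hpA' : (p : ℤ) ∣ A := by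
      rcases hpprime.dvd_mul.mp hpA with h | h
      · exact absurd h hp5'
      · exact h
    have hpB : (p : ℤ) ∣ B := by rw [hb]; exact Dvd.dvd.mul_left hpb 5
    have hpy4 : (p : ℤ) ∣ 5 * y ^ 4 := by
      have : 5 * y ^ 4 = B - A * (x ^ 3 - 2 * x ^ 2 * y + 3 * x * y ^ 2 - 4 * y ^ 3) := by
        rw [hkey]; ring
      rw [this]
      exact dvd_sub hpB (hpA'.mul_right _)
    have hpy : (p : ℤ) ∣ y := by
      rcases hpprime.dvd_mul.mp hpy4 with h | h
      · exact absurd h hp5'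
      · exact hpprime.dvd_of_dvd_pow h
    have hpx : (p : ℤ) ∣ x := by
      have : x = A - y := by rw [hA]; ring
      rw [this]; exact dvd_sub hpA' hpy
    have := hxy.isUnit_of_dvd' hpx hpy
    rw [Int.isUnit_iff] at this
    have := hp.two_le
    omega
  -- factor the l-th power
  have hmul : (5 * A) * b = z ^ l := by
    rw [← hAB, hb]; ring
  obtain ⟨z₁, hz₁⟩ := Int.eq_pow_of_mul_eq_pow_odd_left hcop hlodd hmul
  obtain ⟨z₂, hz₂⟩ := Int.eq_pow_of_mul_eq_pow_odd_right hcop hlodd hmul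
  have hzz : z = z₁ * z₂ := by
    have h1 : (z₁ * z₂) ^ l = z ^ l := by rw [mul_pow, ← hz₁, ← hz₂, hmul]
    exact ((Odd.strictMono_pow (R := ℤ) hlodd).injective h1).symm
  have hz₁0 : z₁ ≠ 0 := fun h => hz (by rw [hzz, h, zero_mul])
  have hz₂0 : z₂ ≠ 0 := fun h => hz (by rw [hzz, h, mul_zero])
  have hcop' : IsCoprime z₁ z₂ := by
    rw [hz₁, hz₂] at hcop
    exact IsCoprime.of_isCoprime_of_dvd_left
      (IsCoprime.of_isCoprime_of_dvd_right hcop (dvd_pow_self z₂ hlpos.ne'))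
      (dvd_pow_self z₁ hlpos.ne')
  exact ⟨z₁, z₂, hz₁0, hz₂0, hcop', by rw [← hz₁], by rw [hb, hz₂], hzz⟩
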